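/- Let b₁ < 0 < b₂ and a, b, c, d ∈ ℂ, and define the characteristic determinant Δ₀(λ) := d + a·e^{i(b₁+b₂)λ} + (ad − bc)·e^{ib₁λ} + e^{ib₂λ}. If λ ∈ ℂ satisfies Δ₀(λ) = 0, then (1 + d·e^{−ib₂λ}) · (1 + a·e^{ib₁λ}) = bc · e^{i(b₁−b₂)λ}. Moreover, if in addition bc ≠ 0 and |Im λ| ≤ h for some h ≥ 0, then |1 + d·e^{−ib₂λ}|² + |1 + a·e^{ib₁λ}|² ≥ 2·|bc|·e^{−(b₂−b₁)h}. -/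

import Mathlib

/-- If `λ` is a zero of the characteristic determinant
`Δ₀(λ) = d + a e^{i(b₁+b₂)λ} + (ad-bc) e^{ib₁λ} + e^{ib₂λ}`, then
`(1 + d e^{-ib₂λ})(1 + a e^{ib₁λ}) = bc e^{i(b₁-b₂)λ}`; moreover, if `bc ≠ 0` and
`|Im λ| ≤ h`, then `|1 + d e^{-ib₂λ}|² + |1 + a e^{ib₁λ}|² ≥ 2|bc| e^{-(b₂-b₁)h}`. -/
theorem stmt18 (b₁ b₂ : ℝ) (hb₁ : b₁ < 0) (hb₂ : 0 < b₂)
    (a b c d : ℂ) (lam : ℂ) (h : ℝ) (hh : 0 ≤ h)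
    (hroot : d + a * Complex.exp (Complex.I * (b₁ + b₂) * lam) +
        (a * d - b * c) * Complex.exp (Complex.I * b₁ * lam) +
        Complex.exp (Complex.I * b₂ * lam) = 0) :
    (1 + d * Complex.exp (-(Complex.I * b₂ * lam))) *
        (1 + a * Complex.exp (Complex.I * b₁ * lam)) =
      b * c * Complex.exp (Complex.I * (b₁ - b₂) * lam) ∧
    (b * c ≠ 0 → |lam.im| ≤ h →
      ‖1 + d * Complex.exp (-(Complex.I * b₂ * lam))‖ ^ 2 +
          ‖1 + a * Complex.exp (Complex.I * b₁ * lam)‖ ^ 2 ≥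
        2 * ‖b * c‖ * Real.exp (-((b₂ - b₁) * h))) := by
  set w := Complex.exp (Complex.I * b₁ * lam) with hw
  set z := Complex.exp (Complex.I * b₂ * lam) with hzdef
  have hz : z ≠ 0 := Complex.exp_ne_zero _
  have e1 : Complex.exp (Complex.I * (↑b₁ + ↑b₂) * lam) = w * z := by
    rw [hw, hzdef, ← Complex.exp_add]; ring_nf
  have e2 : Complex.exp (-(Complex.I * ↑b₂ * lam)) = z⁻¹ := by
    rw [hzdef, ← Complex.exp_neg]
  have e3 : Complex.exp (Complex.I * (↑b₁ - ↑b₂) * lam) = w * z⁻¹ := by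
    rw [hw, hzdef, ← Complex.exp_neg, ← Complex.exp_add]; ring_nf
  push_cast at hroot ⊢
  rw [e1] at hroot
  rw [e2, e3]
  have key : (1 + d * z⁻¹) * (1 + a * w) = b * c * (w * z⁻¹) := by
    field_simp
    linear_combination hroot
  refine ⟨key, fun hbc him => ?_⟩
  have habs : ‖(1 + d * z⁻¹)‖ * ‖(1 + a * w)‖ = ‖b * c‖ * ‖w * z⁻¹‖ := by
    rw [← norm_mul, key, norm_mul]
  have hwz : ‖w * z⁻¹‖ = Real.exp ((b₂ - b₁) * lam.im) := by
    have : w * z⁻¹ = Complex.exp (Complex.I * (↑b₁ - ↑b₂) * lam) := e3.symm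
    rw [this, Complex.norm_exp]
    congr 1
    simp [Complex.mul_re, Complex.mul_im]
    ring
  have hle : Real.exp (-((b₂ - b₁) * h)) ≤ Real.exp ((b₂ - b₁) * lam.im) := by
    apply Real.exp_le_exp.mpr
    have h1 : -h ≤ lam.im := (abs_le.mp him).1
    nlinarith [hb₁, hb₂]
  nlinarith [norm_nonneg (1 + d * z⁻¹), norm_nonneg (1 + a * w), norm_nonneg (b * c),
    sq_nonneg (‖(1 + d * z⁻¹)‖ - ‖(1 + a * w)‖), Real.exp_pos (-((b₂ - b₁) * h)),
    habs, hwz ▸ habs, hle, norm_nonneg (w * z⁻¹)]
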